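/- Let C₁ > 0 and let γ : ℝ → ℝ² satisfy C₁·|s − t| ≤ ‖γ(s) − γ(t)‖ ≤ |s − t| for all s, t ∈ ℝ, and let R, κ > 0. Then sup_{t ∈ ℝ} ∫_ℝ h(s,t) ds < ∞, where for s ≠ t we set h(s,t) = |log ‖γ(s) − γ(t)‖| + 1 if ‖γ(s) − γ(t)‖ ≤ R, and h(s,t) = e^{−κ‖γ(s) − γ(t)‖} if ‖γ(s) − γ(t)‖ > R. -/

import Mathlib

open MeasureTheory Real Set

private lemma aux_abs_log_le {x : ℝ} (hx : 0 ≤ x) :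
    |Real.log x| ≤ 2 * x ^ (-(1/2) : ℝ) + x := by
  rcases eq_or_lt_of_le hx with h | h
  · rw [← h]
    simp [Real.zero_rpow (by norm_num : -(1/2:ℝ) ≠ 0)]
  rcases le_or_gt x 1 with h1 | h1
  · rw [abs_of_nonpos (Real.log_nonpos hx h1)]
    have hy : (0:ℝ) < x ^ (-(1/2) : ℝ) := Real.rpow_pos_of_pos h _
    have hlog : Real.log (x ^ (-(1/2) : ℝ)) = -(1/2) * Real.log x := Real.log_rpow h _
    have h2 := Real.log_le_sub_one_of_pos hy
    nlinarith
  · rw [abs_of_nonneg (Real.log_nonneg h1.le)]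
    have h2 := Real.log_le_sub_one_of_pos h
    have h3 : (0:ℝ) ≤ 2 * x ^ (-(1/2) : ℝ) := by positivity
    linarith

private lemma aux_integrable_abs_rpow {M : ℝ} (hM : 0 < M) :
    IntegrableOn (fun u : ℝ => |u| ^ (-(1/2) : ℝ)) (Icc (-M) M) := by
  have h0M : IntervalIntegrable (fun u : ℝ => |u| ^ (-(1/2) : ℝ)) volume 0 M := by
    have h := intervalIntegral.intervalIntegrable_rpow' (a := 0) (b := M) (r := -(1/2)) (by norm_num)
    rw [intervalIntegrable_iff, uIoc_of_le hM.le] at h ⊢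
    exact h.congr_fun (fun u hu => by rw [abs_of_pos hu.1]) measurableSet_Ioc
  have hneg : IntervalIntegrable (fun u : ℝ => |u| ^ (-(1/2) : ℝ)) volume (-M) 0 := by
    have h := (IntervalIntegrable.iff_comp_neg (by simp)).mp h0M
    simp only [abs_neg, neg_zero] at h
    exact h.symm
  have hInt := hneg.trans h0M
  rw [intervalIntegrable_iff, uIoc_of_le (by linarith : -M ≤ M)] at hInt
  exact (integrableOn_Icc_iff_integrableOn_Ioc' (by simp)).mpr hInt

private lemma aux_integrable_exp_neg_abs {c : ℝ} (hc : 0 < c) :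
    Integrable (fun x : ℝ => Real.exp (-c * |x|)) := by
  have hIoi : IntegrableOn (fun x : ℝ => Real.exp (-c * |x|)) (Ioi 0) :=
    (exp_neg_integrableOn_Ioi 0 hc).congr_fun
      (fun x hx => by rw [abs_of_pos hx]) measurableSet_Ioi
  rw [← integrableOn_univ, ← Iio_union_Ici (a := (0:ℝ)), integrableOn_union,
    integrableOn_Ici_iff_integrableOn_Ioi]
  refine ⟨?_, hIoi⟩
  rw [← (Measure.measurePreserving_neg (volume : Measure ℝ)).integrableOn_comp_preimage
      (Homeomorph.neg ℝ).measurableEmbedding]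
  simpa only [Function.comp_def, abs_neg, neg_preimage, neg_Iio, neg_neg, neg_zero] using hIoi

private lemma aux_meas_rpow : Measurable (fun u : ℝ => |u| ^ (-(1/2) : ℝ)) := by
  measurability

theorem stmt_11 (C₁ : ℝ) (hC₁ : 0 < C₁) (γ : ℝ → EuclideanSpace ℝ (Fin 2))
    (hbil : ∀ s t : ℝ, C₁ * |s - t| ≤ ‖γ s - γ t‖ ∧ ‖γ s - γ t‖ ≤ |s - t|)
    (R κ : ℝ) (hR : 0 < R) (hκ : 0 < κ) :
    (⨆ t : ℝ,
      ∫⁻ s : ℝ, ENNReal.ofReal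
        (if ‖γ s - γ t‖ ≤ R then |Real.log ‖γ s - γ t‖| + 1
         else Real.exp (-κ * ‖γ s - γ t‖))) < ⊤ := by
  set M : ℝ := R / C₁ with hMdef
  have hMpos : 0 < M := div_pos hR hC₁
  set c : ℝ := κ * C₁ with hcdef
  have hcpos : 0 < c := mul_pos hκ hC₁
  set f : ℝ → ℝ := fun u => |Real.log C₁| + 2 * |u| ^ (-(1/2) : ℝ) + |u| + 1 with hfdef
  set G : ℝ → ENNReal := fun u =>
    ENNReal.ofReal ((Icc (-M) M).indicator f u) + ENNReal.ofReal (Real.exp (-c * |u|)) with hGdef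
  -- pointwise bound
  have key : ∀ s t : ℝ,
      ENNReal.ofReal (if ‖γ s - γ t‖ ≤ R then |Real.log ‖γ s - γ t‖| + 1
         else Real.exp (-κ * ‖γ s - γ t‖)) ≤ G (s - t) := by
    intro s t
    obtain ⟨hlow, hup⟩ := hbil s t
    by_cases hxR : ‖γ s - γ t‖ ≤ R
    · rw [if_pos hxR]
      have huM : |s - t| ≤ M := by
        rw [hMdef, le_div_iff₀ hC₁]; nlinarith
      have hmem : s - t ∈ Icc (-M) M := abs_le.mp huM
      have hbound : |Real.log ‖γ s - γ t‖| + 1 ≤ f (s - t) := by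
        rcases eq_or_lt_of_le (abs_nonneg (s - t)) with h0 | h0
        · have hx : ‖γ s - γ t‖ = 0 := le_antisymm (by linarith) (norm_nonneg _)
          rw [hx, Real.log_zero, abs_zero]
          simp only [hfdef, ← h0, Real.zero_rpow (by norm_num : -(1/2:ℝ) ≠ 0)]
          have := abs_nonneg (Real.log C₁)
          linarith
        · have hxpos : 0 < ‖γ s - γ t‖ := lt_of_lt_of_le (by positivity) hlow
          have hlog1 : Real.log ‖γ s - γ t‖ ≤ Real.log |s - t| :=
            Real.log_le_log hxpos hup
          have hlog2 : Real.log (C₁ * |s - t|) ≤ Real.log ‖γ s - γ t‖ :=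
            Real.log_le_log (by positivity) hlow
          rw [Real.log_mul hC₁.ne' (by linarith)] at hlog2
          have habs : |Real.log ‖γ s - γ t‖| ≤ |Real.log C₁| + abs (Real.log |s - t|) := by
            rw [abs_le]
            constructor
            · have := neg_abs_le (Real.log C₁)
              have := neg_abs_le (Real.log |s - t|)
              linarith
            · have := le_abs_self (Real.log |s - t|)
              have := abs_nonneg (Real.log C₁)
              linarith
          have hlog3 : abs (Real.log |s - t|) ≤ 2 * |s - t| ^ (-(1/2) : ℝ) + |s - t| := by
            have := aux_abs_log_le (abs_nonneg (s - t))
            simpa [abs_abs] using this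
          simp only [hfdef]
          linarith
      calc ENNReal.ofReal (|Real.log ‖γ s - γ t‖| + 1)
          ≤ ENNReal.ofReal ((Icc (-M) M).indicator f (s - t)) := by
            rw [indicator_of_mem hmem]
            exact ENNReal.ofReal_le_ofReal hbound
        _ ≤ G (s - t) := le_self_add
    · rw [if_neg hxR]
      have hexp : Real.exp (-κ * ‖γ s - γ t‖) ≤ Real.exp (-c * |s - t|) := by
        apply Real.exp_le_exp.mpr
        rw [hcdef]; nlinarith
      calc ENNReal.ofReal (Real.exp (-κ * ‖γ s - γ t‖))
          ≤ ENNReal.ofReal (Real.exp (-c * |s - t|)) := ENNReal.ofReal_le_ofReal hexp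
        _ ≤ G (s - t) := le_add_self
  have htrans : ∀ t : ℝ,
      (∫⁻ s : ℝ, ENNReal.ofReal
        (if ‖γ s - γ t‖ ≤ R then |Real.log ‖γ s - γ t‖| + 1
         else Real.exp (-κ * ‖γ s - γ t‖))) ≤ ∫⁻ u, G u := by
    intro t
    calc (∫⁻ s : ℝ, ENNReal.ofReal
        (if ‖γ s - γ t‖ ≤ R then |Real.log ‖γ s - γ t‖| + 1
         else Real.exp (-κ * ‖γ s - γ t‖)))
        ≤ ∫⁻ s, G (s - t) := lintegral_mono fun s => key s t
      _ = ∫⁻ u, G u := lintegral_sub_right_eq_self G t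
  refine lt_of_le_of_lt (iSup_le htrans) ?_
  have hfmeas : Measurable f :=
    ((measurable_const.add (aux_meas_rpow.const_mul 2)).add measurable_abs).add measurable_const
  have hmeas : Measurable fun u : ℝ => ENNReal.ofReal ((Icc (-M) M).indicator f u) :=
    ENNReal.measurable_ofReal.comp (hfmeas.indicator measurableSet_Icc)
  rw [hGdef, lintegral_add_left hmeas]
  apply ENNReal.add_lt_top.mpr
  constructor
  · have heq : ∀ u : ℝ, ENNReal.ofReal ((Icc (-M) M).indicator f u)
        = (Icc (-M) M).indicator (fun u => ENNReal.ofReal (f u)) u := by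
      intro u
      by_cases hu : u ∈ Icc (-M) M
      · simp [indicator_of_mem hu]
      · simp [indicator_of_notMem hu]
    simp only [heq]
    rw [lintegral_indicator measurableSet_Icc]
    have hint : IntegrableOn f (Icc (-M) M) := by
      refine (((integrableOn_const measure_Icc_lt_top.ne).add
        ((aux_integrable_abs_rpow hMpos).const_mul 2)).add ?_).add
        (integrableOn_const measure_Icc_lt_top.ne)
      exact continuous_abs.integrableOn_Icc
    exact hint.lintegral_lt_top
  · exact (aux_integrable_exp_neg_abs hcpos).lintegral_lt_top
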